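/- Let S = K[x_1, …, x_n] with n ≥ 2, let ℓ_1, …, ℓ_n and m be positive integers, and let Γ = ⋂_{k=1}^n (x_1^{ℓ_1}, …, x_{k−1}^{ℓ_{k−1}}, x_{k+1}^{ℓ_{k+1}}, …, x_n^{ℓ_n})^m. Then Γ is generated by the set B_Γ = ⋃_{t=1}^m { x_1^{ℓ_1 b_1} ⋯ x_n^{ℓ_n b_n} : b_1, …, b_n ≥ 0, Σ_i b_i = m + t, b_i ≤ t for all i, and there exist 1 ≤ u < v ≤ n with b_u = b_v = t }, and B_Γ is a minimal generating set of Γ (no proper subset of B_Γ generates Γ). In particular, Γ = Φ(Γ̄)S where Γ̄ = ⋂_{k=1}^n (y_1, …, y_{k−1}, y_{k+1}, …, y_n)^m ⊆ P. -/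

import Mathlib

open MvPolynomial Pointwise

/-- The set `B_Γ = ⋃_{t=1}^m { x_1^{ℓ_1 b_1} ⋯ x_n^{ℓ_n b_n} : Σ b_i = m + t, b_i ≤ t,
and b_u = b_v = t for some u < v }`. -/
def BGamma (K : Type) [Field K] (n m : ℕ) (ℓ : Fin n → ℕ) : Set (MvPolynomial (Fin n) K) :=
  {g | ∃ t : ℕ, 1 ≤ t ∧ t ≤ m ∧ ∃ b : Fin n → ℕ,
    (∑ i, b i) = m + t ∧ (∀ i, b i ≤ t) ∧
    (∃ u v : Fin n, u < v ∧ b u = t ∧ b v = t) ∧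
    g = ∏ i, X i ^ (ℓ i * b i)}

namespace FatGrid

variable {K : Type} [Field K] {n : ℕ}


/-- An admissible exponent vector. -/
def Adm (n m : ℕ) : Set (Fin n → ℕ) :=
  {b | ∃ t : ℕ, 1 ≤ t ∧ t ≤ m ∧ (∑ i, b i) = m + t ∧ (∀ i, b i ≤ t) ∧
    ∃ u v : Fin n, u < v ∧ b u = t ∧ b v = t}

/-- Reduce a function to a prescribed smaller sum. -/
lemma reduce {n : ℕ} (m : ℕ) :
    ∀ f : Fin n → ℕ, m ≤ ∑ i, f i → ∃ c : Fin n → ℕ, (∀ i, c i ≤ f i) ∧ (∑ i, c i) = m := by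
  induction m with
  | zero => exact fun f _ => ⟨0, fun i => Nat.zero_le _, by simp⟩
  | succ m ih =>
    intro f hf
    have hpos : (∑ i, f i) ≠ 0 := by omega
    obtain ⟨i, -, hi⟩ := Finset.exists_ne_zero_of_sum_ne_zero hpos
    set f' : Fin n → ℕ := Function.update f i (f i - 1) with hf'
    have hsplit : ∑ j, f j = f i + ∑ j ∈ Finset.univ.erase i, f j :=
      (Finset.add_sum_erase _ f (Finset.mem_univ i)).symm
    have hsplit' : ∑ j, f' j = (f i - 1) + ∑ j ∈ Finset.univ.erase i, f j := by
      rw [← Finset.add_sum_erase _ f' (Finset.mem_univ i)]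
      congr 1
      · simp [hf']
      · exact Finset.sum_congr rfl fun j hj =>
          Function.update_of_ne (Finset.ne_of_mem_erase hj) _ _
    obtain ⟨c, hc, hcs⟩ := ih f' (by omega)
    refine ⟨Function.update c i (c i + 1), fun j => ?_, ?_⟩
    · by_cases hj : j = i
      · subst hj
        have := hc j
        simp only [hf', Function.update_self] at this ⊢
        omega
      · simpa [Function.update_of_ne hj] using (hc j).trans_eq (Function.update_of_ne hj _ _)
    · rw [← Finset.add_sum_erase _ _ (Finset.mem_univ i)]
      rw [← Finset.add_sum_erase _ c (Finset.mem_univ i)] at hcs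
      have : ∑ j ∈ Finset.univ.erase i, Function.update c i (c i + 1) j
          = ∑ j ∈ Finset.univ.erase i, c j :=
        Finset.sum_congr rfl fun j hj => Function.update_of_ne (Finset.ne_of_mem_erase hj) _ _
      simp only [Function.update_self, this]
      omega

/-- From an admissible vector, extract a vector of sum `m` avoiding `k`. -/
lemma exists_c {n m : ℕ} {b : Fin n → ℕ} (hb : b ∈ Adm n m) (k : Fin n) :
    ∃ c : Fin n → ℕ, c k = 0 ∧ (∑ i, c i) = m ∧ ∀ i, c i ≤ b i := by
  obtain ⟨t, _, _, hsum, hle, -⟩ := hb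
  have hks : ∑ j, b j = b k + ∑ j ∈ Finset.univ.erase k, b j :=
    (Finset.add_sum_erase _ b (Finset.mem_univ k)).symm
  set f : Fin n → ℕ := Function.update b k 0 with hf
  have hfs : ∑ j, f j = ∑ j ∈ Finset.univ.erase k, b j := by
    rw [← Finset.add_sum_erase _ f (Finset.mem_univ k)]
    simp only [hf, Function.update_self, zero_add]
    exact Finset.sum_congr rfl fun j hj => Function.update_of_ne (Finset.ne_of_mem_erase hj) _ _
  have hbk := hle k
  obtain ⟨c, hc, hcs⟩ := reduce m f (by omega)
  refine ⟨c, ?_, hcs, fun i => ?_⟩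
  · have := hc k; simp only [hf, Function.update_self] at this; omega
  · by_cases hi : i = k
    · subst hi; have := hc i; simp only [hf, Function.update_self] at this; omega
    · exact (hc i).trans_eq (Function.update_of_ne hi _ _)

/-- Antichain property of admissible vectors. -/
lemma adm_antichain {n m : ℕ} {b b' : Fin n → ℕ} (hb : b ∈ Adm n m) (hb' : b' ∈ Adm n m)
    (h : ∀ i, b' i ≤ b i) : b' = b := by
  obtain ⟨t, ht1, htm, hsum, hle, u, v, huv, hu, hv⟩ := hb
  obtain ⟨t', ht1', htm', hsum', hle', -⟩ := hb'
  have hdiff : ∑ i, (b i - b' i) + ∑ i, b' i = ∑ i, b i := by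
    rw [← Finset.sum_add_distrib]
    exact Finset.sum_congr rfl fun i _ => by have := h i; omega
  have hpair : (b u - b' u) + (b v - b' v) ≤ ∑ i, (b i - b' i) := by
    have : ({u, v} : Finset (Fin n)) ⊆ Finset.univ := Finset.subset_univ _
    calc (b u - b' u) + (b v - b' v) = ∑ i ∈ ({u, v} : Finset (Fin n)), (b i - b' i) := by
          rw [Finset.sum_pair huv.ne]
      _ ≤ ∑ i, (b i - b' i) := Finset.sum_le_sum_of_subset this
  have hbu' := hle' u
  have hbv' := hle' v
  have htt : t' = t := by omega
  subst htt
  have hseq : ∑ i, b' i = ∑ i, b i := by omega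
  funext i
  exact (Finset.sum_eq_sum_iff_of_le (fun i _ => h i)).mp hseq i (Finset.mem_univ i)

/-- The main combinatorial lemma: existence of an admissible dominated vector. -/
lemma exists_adm {n : ℕ} (hn : 2 ≤ n) {ℓ : Fin n → ℕ} (hℓ : ∀ j, 0 < ℓ j) {m : ℕ} (hm : 0 < m)
    (a : Fin n → ℕ)
    (h : ∀ k, ∃ c : Fin n → ℕ, c k = 0 ∧ (∑ i, c i) = m ∧ ∀ i, ℓ i * c i ≤ a i) :
    ∃ b ∈ Adm n m, ∀ i, ℓ i * b i ≤ a i := by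
  classical
  set β : Fin n → ℕ := fun i => a i / ℓ i with hβ
  -- Step 1: ∀ k, m ≤ ∑_{j ≠ k} β j
  have step1 : ∀ k, m ≤ ∑ j ∈ Finset.univ.erase k, β j := by
    intro k
    obtain ⟨c, hck, hcs, hca⟩ := h k
    have hcβ : ∀ i, c i ≤ β i := fun i =>
      (Nat.le_div_iff_mul_le (hℓ i)).mpr (by rw [Nat.mul_comm]; exact hca i)
    calc m = ∑ i, c i := hcs.symm
      _ = c k + ∑ j ∈ Finset.univ.erase k, c j := (Finset.add_sum_erase _ c (Finset.mem_univ k)).symm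
      _ = ∑ j ∈ Finset.univ.erase k, c j := by rw [hck, zero_add]
      _ ≤ ∑ j ∈ Finset.univ.erase k, β j := Finset.sum_le_sum fun j _ => hcβ j
  set β' : Fin n → ℕ := fun i => min (β i) m with hβ'
  have step2 : ∀ k, m ≤ ∑ j ∈ Finset.univ.erase k, β' j := by
    intro k
    by_cases hc : ∃ j ∈ Finset.univ.erase k, m ≤ β j
    · obtain ⟨j, hj, hjm⟩ := hc
      calc m = β' j := by simp [hβ', hjm]
        _ ≤ ∑ j ∈ Finset.univ.erase k, β' j :=
          Finset.single_le_sum (fun _ _ => Nat.zero_le _) hj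
    · push_neg at hc
      have : ∑ j ∈ Finset.univ.erase k, β' j = ∑ j ∈ Finset.univ.erase k, β j :=
        Finset.sum_congr rfl fun j hj => by
          have := hc j hj; simp [hβ']; omega
      rw [this]; exact step1 k
  have hβ'β : ∀ i, β' i ≤ β i := fun i => min_le_left _ _
  have hβ'm : ∀ i, β' i ≤ m := fun i => min_le_right _ _
  -- choose u maximizing β'
  have hne : (Finset.univ : Finset (Fin n)).Nonempty := by
    rw [Finset.univ_nonempty_iff]; exact Fin.pos_iff_nonempty.mp (by omega)
  obtain ⟨u, -, hu⟩ := Finset.exists_max_image Finset.univ β' hne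
  have hne' : (Finset.univ.erase u).Nonempty := by
    rw [← Finset.card_pos, Finset.card_erase_of_mem (Finset.mem_univ u)]
    simp; omega
  obtain ⟨v, hv, hvmax⟩ := Finset.exists_max_image (Finset.univ.erase u) β' hne'
  have hvu : v ≠ u := Finset.ne_of_mem_erase hv
  set t : ℕ := β' v with htdef
  have htm : t ≤ m := hβ'm v
  have htu : t ≤ β' u := hu v (Finset.mem_univ v)
  have ht1 : 1 ≤ t := by
    have hsum_ne : ∑ j ∈ Finset.univ.erase u, β' j ≠ 0 := by have := step2 u; omega
    obtain ⟨j, hj, hjne⟩ := Finset.exists_ne_zero_of_sum_ne_zero hsum_ne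
    have := hvmax j hj; omega
  -- other indices bounded by t
  have hother : ∀ j, j ≠ u → β' j ≤ t := fun j hj =>
    hvmax j (Finset.mem_erase.mpr ⟨hj, Finset.mem_univ j⟩)
  -- set up f0 and reduce
  set f0 : Fin n → ℕ := fun j => if j = u ∨ j = v then 0 else β' j with hf0
  have hsum_f0 : ∑ j ∈ (Finset.univ.erase u).erase v, β' j = ∑ j, f0 j := by
    rw [← Finset.sum_subset (Finset.subset_univ ((Finset.univ.erase u).erase v))]
    · exact Finset.sum_congr rfl fun j hj => by
        have h1 := Finset.ne_of_mem_erase hj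
        have h2 := Finset.ne_of_mem_erase (Finset.mem_of_mem_erase hj)
        simp [hf0, h1, h2]
    · intro j _ hj
      simp only [Finset.mem_erase, Finset.mem_univ, and_true, not_and_or, not_not] at hj
      rcases hj with hj | hj <;> simp [hf0, hj]
  have hsum_erase : ∑ j ∈ Finset.univ.erase u, β' j
      = t + ∑ j ∈ (Finset.univ.erase u).erase v, β' j := by
    rw [← Finset.add_sum_erase _ β' hv]
  have hred : m - t ≤ ∑ j, f0 j := by
    have := step2 u; omega
  obtain ⟨c, hc, hcs⟩ := reduce (m - t) f0 hred
  have hcu : c u = 0 := by have := hc u; simp [hf0] at this; omega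
  have hcv : c v = 0 := by have := hc v; simp [hf0] at this; omega
  set b : Fin n → ℕ := fun j => if j = u ∨ j = v then t else c j with hb
  have hsum_b : ∑ j, b j = m + t := by
    have e1 : ∑ j, b j = b u + ∑ j ∈ Finset.univ.erase u, b j :=
      (Finset.add_sum_erase _ b (Finset.mem_univ u)).symm
    have e2 : ∑ j ∈ Finset.univ.erase u, b j
        = b v + ∑ j ∈ (Finset.univ.erase u).erase v, b j := (Finset.add_sum_erase _ b hv).symm
    have e3 : ∑ j ∈ (Finset.univ.erase u).erase v, b j
        = ∑ j ∈ (Finset.univ.erase u).erase v, c j :=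
      Finset.sum_congr rfl fun j hj => by
        have h1 := Finset.ne_of_mem_erase hj
        have h2 := Finset.ne_of_mem_erase (Finset.mem_of_mem_erase hj)
        simp [hb, h1, h2]
    have e4 : ∑ j, c j = c u + ∑ j ∈ Finset.univ.erase u, c j :=
      (Finset.add_sum_erase _ c (Finset.mem_univ u)).symm
    have e5 : ∑ j ∈ Finset.univ.erase u, c j
        = c v + ∑ j ∈ (Finset.univ.erase u).erase v, c j := (Finset.add_sum_erase _ c hv).symm
    have hbu : b u = t := by simp [hb]
    have hbv : b v = t := by simp [hb]
    rw [e1, e2, e3, hbu, hbv]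
    omega
  refine ⟨b, ⟨t, ht1, htm, hsum_b, ?_, ?_⟩, ?_⟩
  · intro i
    by_cases hi : i = u ∨ i = v
    · simp [hb, hi]
    · push_neg at hi
      have := hc i
      simp only [hb, hf0, hi.1, hi.2, or_self, if_false] at this ⊢
      have := hother i hi.1
      omega
  · rcases lt_trichotomy u v with hlt | heq | hlt
    · exact ⟨u, v, hlt, by simp [hb], by simp [hb]⟩
    · exact absurd heq.symm hvu
    · exact ⟨v, u, hlt, by simp [hb], by simp [hb]⟩
  · intro i
    have hbi : b i ≤ β i := by
      by_cases hi : i = u ∨ i = v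
      · rcases hi with hi | hi
        · rw [hi]
          have hbu : b u = t := by simp [hb]
          rw [hbu]; exact htu.trans (hβ'β u)
        · rw [hi]
          have hbv : b v = t := by simp [hb]
          rw [hbv]; exact hβ'β v
      · push_neg at hi
        have := hc i
        simp only [hb, hf0, hi.1, hi.2, or_self, if_false] at this ⊢
        exact this.trans (hβ'β i)
    calc ℓ i * b i ≤ ℓ i * β i := Nat.mul_le_mul_left _ hbi
      _ ≤ a i := by rw [hβ, Nat.mul_comm]; exact Nat.div_mul_le_self _ _

/-- Product of powers of variables as a monomial. -/
lemma prod_X_pow (e : Fin n → ℕ) :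
    (∏ i, (X i : MvPolynomial (Fin n) K) ^ e i)
      = monomial (Finsupp.equivFunOnFinite.symm e) 1 := by
  classical
  rw [← prod_X_pow_eq_monomial]
  exact (Finset.prod_subset (Finset.subset_univ _) fun i _ hi => by
    have h0 : e i = 0 := Finsupp.notMem_support_iff.mp hi
    rw [h0, pow_zero]).symm

/-- The exponent sets generating `I_k^m`. -/
def pset (ℓ : Fin n → ℕ) (k : Fin n) (m : ℕ) : Set (Fin n →₀ ℕ) :=
  {d | ∃ c : Fin n → ℕ, c k = 0 ∧ (∑ i, c i) = m ∧
    d = Finsupp.equivFunOnFinite.symm fun i => ℓ i * c i}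

lemma image_monomial_mul (A B : Set (Fin n →₀ ℕ)) :
    ((fun d => monomial d (1 : K)) '' A) * ((fun d => monomial d (1 : K)) '' B)
      = (fun d => monomial d (1 : K)) '' (A + B) := by
  ext w
  simp only [Set.mem_mul, Set.mem_image, Set.mem_add]
  constructor
  · rintro ⟨-, ⟨x, hx, rfl⟩, -, ⟨y, hy, rfl⟩, rfl⟩
    exact ⟨x + y, ⟨x, hx, y, hy, rfl⟩, by rw [monomial_mul, one_mul]⟩
  · rintro ⟨-, ⟨x, hx, y, hy, rfl⟩, rfl⟩
    exact ⟨_, ⟨x, hx, rfl⟩, _, ⟨y, hy, rfl⟩, by rw [monomial_mul, one_mul]⟩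

lemma pset_add (ℓ : Fin n → ℕ) (k : Fin n) (m : ℕ) :
    pset ℓ k m + ((fun j => Finsupp.single j (ℓ j)) '' {j | j ≠ k}) = pset ℓ k (m + 1) := by
  classical
  ext d
  simp only [Set.mem_add, Set.mem_image, Set.mem_setOf_eq, pset]
  constructor
  · rintro ⟨-, ⟨c, hck, hcs, rfl⟩, -, ⟨j, hjk, rfl⟩, rfl⟩
    refine ⟨fun i => c i + if i = j then 1 else 0, ?_, ?_, ?_⟩
    · show c k + (if k = j then 1 else 0) = 0
      rw [if_neg (Ne.symm hjk), hck]
    · rw [Finset.sum_add_distrib, hcs, Finset.sum_ite_eq' Finset.univ j fun _ => 1]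
      simp
    · ext i
      simp only [Finsupp.add_apply, Finsupp.coe_equivFunOnFinite_symm,
        Finsupp.single_apply]
      by_cases hij : j = i
      · subst hij; simp; ring
      · simp [hij, Ne.symm hij]
  · rintro ⟨c, hck, hcs, rfl⟩
    have : (∑ i, c i) ≠ 0 := by omega
    obtain ⟨j, -, hj⟩ := Finset.exists_ne_zero_of_sum_ne_zero this
    have hjk : j ≠ k := fun h => hj (h ▸ hck)
    refine ⟨_, ⟨fun i => c i - if i = j then 1 else 0, ?_, ?_, rfl⟩, _, ⟨j, hjk, rfl⟩, ?_⟩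
    · show c k - (if k = j then 1 else 0) = 0
      rw [if_neg (Ne.symm hjk), hck]
    · have hsum_ite : ∑ i, (if i = j then 1 else 0) = 1 := by
        rw [Finset.sum_ite_eq' Finset.univ j fun _ => 1]; simp
      have hrec : ∑ i, ((c i - if i = j then 1 else 0) + (if i = j then 1 else 0))
          = ∑ i, c i := Finset.sum_congr rfl fun i _ => by
        by_cases hij : i = j
        · subst hij; rw [if_pos rfl]; omega
        · simp [hij]
      rw [Finset.sum_add_distrib, hsum_ite] at hrec
      show (∑ i, (c i - if i = j then 1 else 0)) = m
      omega
    · ext i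
      simp only [Finsupp.add_apply, Finsupp.coe_equivFunOnFinite_symm,
        Finsupp.single_apply]
      by_cases hij : j = i
      · subst hij
        simp only [if_pos rfl]
        obtain ⟨q, hq⟩ : ∃ q, c j = q + 1 := ⟨c j - 1, by omega⟩
        rw [hq]
        simp [Nat.mul_succ]
      · simp [hij, Ne.symm hij]


lemma span_pow_eq (ℓ : Fin n → ℕ) (k : Fin n) (m : ℕ) :
    (Ideal.span ((fun j : Fin n => (X j : MvPolynomial (Fin n) K) ^ ℓ j) '' {j | j ≠ k})) ^ m
      = Ideal.span ((fun d => monomial d (1 : K)) '' pset ℓ k m) := by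
  classical
  have hbase : ((fun j : Fin n => (X j : MvPolynomial (Fin n) K) ^ ℓ j) '' {j | j ≠ k})
      = (fun d => monomial d (1 : K)) '' ((fun j => Finsupp.single j (ℓ j)) '' {j | j ≠ k}) := by
    rw [Set.image_image]
    exact Set.image_congr' (fun j => X_pow_eq_monomial)
  induction m with
  | zero =>
    rw [pow_zero, Ideal.one_eq_top, eq_comm, Ideal.eq_top_iff_one]
    refine Ideal.subset_span ⟨0, ⟨fun _ => 0, rfl, by simp, by ext i; simp⟩, by simp⟩
  | succ m ih =>
    rw [pow_succ, ih, hbase, Ideal.span_mul_span', image_monomial_mul, pset_add]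

lemma mem_pow_iff (ℓ : Fin n → ℕ) (k : Fin n) (m : ℕ) (p : MvPolynomial (Fin n) K) :
    p ∈ (Ideal.span ((fun j : Fin n => (X j : MvPolynomial (Fin n) K) ^ ℓ j) '' {j | j ≠ k})) ^ m
      ↔ ∀ a ∈ p.support, ∃ c : Fin n → ℕ, c k = 0 ∧ (∑ i, c i) = m ∧
          ∀ i, ℓ i * c i ≤ a i := by
  rw [span_pow_eq, mem_ideal_span_monomial_image]
  refine forall₂_congr fun a ha => ?_
  constructor
  · rintro ⟨d, ⟨c, h1, h2, rfl⟩, hle⟩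
    exact ⟨c, h1, h2, fun i => by simpa using Finsupp.le_def.mp hle i⟩
  · rintro ⟨c, h1, h2, h3⟩
    exact ⟨_, ⟨c, h1, h2, rfl⟩, Finsupp.le_def.mpr fun i => by simpa using h3 i⟩

lemma BGamma_eq (ℓ : Fin n → ℕ) (m : ℕ) :
    BGamma K n m ℓ = (fun d => monomial d (1 : K)) ''
      {d | ∃ b ∈ Adm n m, d = Finsupp.equivFunOnFinite.symm fun i => ℓ i * b i} := by
  ext g
  simp only [BGamma, Adm, Set.mem_image, Set.mem_setOf_eq]
  constructor
  · rintro ⟨t, h1, h2, b, h3, h4, h5, rfl⟩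
    exact ⟨_, ⟨b, ⟨t, h1, h2, h3, h4, h5⟩, rfl⟩, (prod_X_pow _).symm⟩
  · rintro ⟨d, ⟨b, ⟨t, h1, h2, h3, h4, h5⟩, rfl⟩, rfl⟩
    exact ⟨t, h1, h2, b, h3, h4, h5, (prod_X_pow _).symm⟩

lemma mem_span_BGamma_iff (ℓ : Fin n → ℕ) (m : ℕ) (p : MvPolynomial (Fin n) K) :
    p ∈ Ideal.span (BGamma K n m ℓ)
      ↔ ∀ a ∈ p.support, ∃ b ∈ Adm n m, ∀ i, ℓ i * b i ≤ a i := by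
  rw [BGamma_eq, mem_ideal_span_monomial_image]
  refine forall₂_congr fun a ha => ?_
  constructor
  · rintro ⟨d, ⟨b, hb, rfl⟩, hle⟩
    exact ⟨b, hb, fun i => by simpa using Finsupp.le_def.mp hle i⟩
  · rintro ⟨b, hb, h3⟩
    exact ⟨_, ⟨b, hb, rfl⟩, Finsupp.le_def.mpr fun i => by simpa using h3 i⟩


/-- Part 1: the intersection equals the span of `BGamma`. -/
lemma span_BGamma (hn : 2 ≤ n) (ℓ : Fin n → ℕ) (hℓ : ∀ j, 0 < ℓ j) (m : ℕ) (hm : 0 < m) :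
    (⨅ k : Fin n,
        (Ideal.span ((fun j : Fin n => (X j : MvPolynomial (Fin n) K) ^ ℓ j) ''
          {j | j ≠ k})) ^ m) = Ideal.span (BGamma K n m ℓ) := by
  ext p
  rw [Ideal.mem_iInf, mem_span_BGamma_iff]
  simp only [mem_pow_iff]
  constructor
  · intro h a ha
    exact exists_adm hn hℓ hm _ fun k => h k a ha
  · intro h k a ha
    obtain ⟨b, hb, hba⟩ := h a ha
    obtain ⟨c, hck, hcs, hcb⟩ := exists_c hb k
    exact ⟨c, hck, hcs, fun i => (Nat.mul_le_mul_left _ (hcb i)).trans (hba i)⟩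

end FatGrid

open FatGrid in
/-- Let `Γ = ⋂_{k=1}^n (x_1^{ℓ_1},…,x̂_k^{ℓ_k},…,x_n^{ℓ_n})^m ⊆ S`.
Then `Γ` is generated by `B_Γ`, `B_Γ` is a minimal generating set (no proper subset
generates `Γ`), and `Γ = Φ(Γ̄)S` where `Γ̄ = ⋂_{k=1}^n (y_1,…,ŷ_k,…,y_n)^m` and
`Φ(y_i) = x_i^{ℓ_i}`. -/
theorem fat_grid_monomial_ideal_minimal_generators
    (K : Type) [Field K] [Infinite K] (n : ℕ) (hn : 2 ≤ n)
    (ℓ : Fin n → ℕ) (hℓ : ∀ j, 0 < ℓ j) (m : ℕ) (hm : 0 < m) :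
    (⨅ k : Fin n,
        (Ideal.span ((fun j : Fin n => (X j : MvPolynomial (Fin n) K) ^ ℓ j) ''
          {j | j ≠ k})) ^ m) =
      Ideal.span (BGamma K n m ℓ) ∧
    (∀ B ⊂ BGamma K n m ℓ,
      Ideal.span B ≠
        (⨅ k : Fin n,
          (Ideal.span ((fun j : Fin n => (X j : MvPolynomial (Fin n) K) ^ ℓ j) ''
            {j | j ≠ k})) ^ m)) ∧
    (⨅ k : Fin n,
        (Ideal.span ((fun j : Fin n => (X j : MvPolynomial (Fin n) K) ^ ℓ j) ''
          {j | j ≠ k})) ^ m) =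
      Ideal.map
        (aeval (fun i : Fin n => (X i : MvPolynomial (Fin n) K) ^ ℓ i) :
          MvPolynomial (Fin n) K →ₐ[K] MvPolynomial (Fin n) K)
        (⨅ k : Fin n,
          (Ideal.span ((fun j : Fin n => (X j : MvPolynomial (Fin n) K)) '' {j | j ≠ k})) ^ m) := by
  have part1 := span_BGamma (K := K) hn ℓ hℓ m hm
  refine ⟨part1, ?_, ?_⟩
  · -- minimality
    classical
    intro B hB heq
    have hBsub := hB.subset
    obtain ⟨g, hgΓ, hgB⟩ := Set.exists_of_ssubset hB
    -- g as a monomial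
    rw [BGamma_eq] at hgΓ
    obtain ⟨e0, he0, rfl⟩ := hgΓ
    obtain ⟨b0, hb0, rfl⟩ := he0
    -- B lies in the monomial image avoiding e0
    set E : Set (Fin n →₀ ℕ) :=
      {d | ∃ b ∈ Adm n m, d = Finsupp.equivFunOnFinite.symm fun i => ℓ i * b i} with hE
    set e0 : Fin n →₀ ℕ := Finsupp.equivFunOnFinite.symm fun i => ℓ i * b0 i with he0d
    have hBsub' : B ⊆ (fun d => monomial d (1 : K)) '' (E \ {e0}) := by
      intro x hx
      have := hBsub hx
      rw [BGamma_eq] at this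
      obtain ⟨e, heE, rfl⟩ := this
      refine ⟨e, ⟨heE, fun hee => ?_⟩, rfl⟩
      rw [Set.mem_singleton_iff] at hee
      subst hee
      exact hgB hx
    have hgmem : monomial e0 (1 : K) ∈ Ideal.span B := by
      rw [heq]
      rw [part1]
      exact Ideal.subset_span (by rw [BGamma_eq]; exact ⟨e0, ⟨b0, hb0, rfl⟩, rfl⟩)
    have := (Ideal.span_mono hBsub') hgmem
    rw [mem_ideal_span_monomial_image] at this
    have hsupp : e0 ∈ (monomial e0 (1 : K)).support := by
      rw [support_monomial, if_neg one_ne_zero]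
      exact Finset.mem_singleton_self _
    obtain ⟨e, ⟨heE, hene⟩, hle⟩ := this e0 hsupp
    obtain ⟨b, hb, rfl⟩ := heE
    have hble : ∀ i, b i ≤ b0 i := by
      intro i
      have h1 : ℓ i * b i ≤ ℓ i * b0 i := by simpa [he0d] using Finsupp.le_def.mp hle i
      exact Nat.le_of_mul_le_mul_left h1 (hℓ i)
    have : b = b0 := adm_antichain hb0 hb hble
    subst this
    exact hene rfl
  · -- the map statement
    have h1 : (⨅ k : Fin n,
        (Ideal.span ((fun j : Fin n => (X j : MvPolynomial (Fin n) K)) '' {j | j ≠ k})) ^ m)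
        = Ideal.span (BGamma K n m fun _ => 1) := by
      rw [← span_BGamma (K := K) hn (fun _ => 1) (fun _ => one_pos) m hm]
      exact iInf_congr fun k => by
        rw [Set.image_congr' (fun j => (pow_one (X j : MvPolynomial (Fin n) K)).symm)]
    rw [part1, h1, Ideal.map_span]
    congr 1
    ext g
    have key : ∀ b : Fin n → ℕ,
        (aeval fun i : Fin n => (X i : MvPolynomial (Fin n) K) ^ ℓ i)
          (∏ i, (X i : MvPolynomial (Fin n) K) ^ ((fun _ => (1 : ℕ)) i * b i))
            = ∏ i, (X i : MvPolynomial (Fin n) K) ^ (ℓ i * b i) := by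
      intro b
      rw [map_prod]
      refine Finset.prod_congr rfl fun i _ => ?_
      rw [map_pow, aeval_X, ← pow_mul, one_mul, mul_comm]
    simp only [Set.mem_image, BGamma, Set.mem_setOf_eq]
    constructor
    · rintro ⟨t, h1, h2, b, h3, h4, h5, rfl⟩
      exact ⟨∏ i, (X i : MvPolynomial (Fin n) K) ^ ((fun _ => (1 : ℕ)) i * b i),
        ⟨t, h1, h2, b, h3, h4, h5, rfl⟩, key b⟩
    · rintro ⟨x, ⟨t, h1, h2, b, h3, h4, h5, rfl⟩, rfl⟩
      exact ⟨t, h1, h2, b, h3, h4, h5, key b⟩
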